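/- Let β > 1/3 be real, let λ_n = n(n−1)(n−2), and for m ≥ 3 set r̃_m = (λ_m^β + λ_{m+1}^β)/2. Then there exist a constant C > 0 and an integer m₀ ≥ 3 such that for all m ≥ m₀, the series ∑_{n=3}^∞ 1/|λ_n^β − r̃_m| converges and satisfies ∑_{n=3}^∞ 1/|λ_n^β − r̃_m| ≤ C. -/

import Mathlib

/-- The eigenvalues `λₙ = n(n−1)(n−2)` of `G = A*³A³`. -/
def lamG (n : ℕ) : ℕ := n * (n - 1) * (n - 2)

/-- The radius `r̃_m = (λ_m^β + λ_{m+1}^β)/2`. -/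
noncomputable def rTilde (β : ℝ) (m : ℕ) : ℝ :=
  ((lamG m : ℝ) ^ β + (lamG (m + 1) : ℝ) ^ β) / 2

namespace GribovAux

lemma lamG_formula (j : ℕ) :
    (lamG (j + 3) : ℝ) = ((j : ℝ) + 3) * ((j : ℝ) + 2) * ((j : ℝ) + 1) := by
  have e1 : j + 3 - 1 = j + 2 := by omega
  have e2 : j + 3 - 2 = j + 1 := by omega
  unfold lamG
  rw [e1, e2]
  push_cast
  ring

lemma lamG_mono : Monotone lamG := fun a b h => by
  unfold lamG
  exact Nat.mul_le_mul (Nat.mul_le_mul h (Nat.sub_le_sub_right h 1)) (Nat.sub_le_sub_right h 2)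

/-- The constant governing the gaps. -/
noncomputable def c1 (β : ℝ) : ℝ := 3 * min β 1 / (8 * (2 : ℝ) ^ (3 * β - 1))

/-- The constant governing differences at power scale. -/
noncomputable def c2 (β : ℝ) : ℝ := c1 β / (2 : ℝ) ^ (3 * β)

lemma c1_pos {β : ℝ} (hβ : 1 / 3 < β) : 0 < c1 β := by
  have h1 : 0 < min β 1 := lt_min (by linarith) one_pos
  have h2 : (0 : ℝ) < (2 : ℝ) ^ (3 * β - 1) := Real.rpow_pos_of_pos two_pos _
  unfold c1
  positivity

lemma c2_pos {β : ℝ} (hβ : 1 / 3 < β) : 0 < c2 β := by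
  have h1 := c1_pos hβ
  have h2 : (0 : ℝ) < (2 : ℝ) ^ (3 * β) := Real.rpow_pos_of_pos two_pos _
  unfold c2
  positivity

/-- The basic mean-value-type inequality `x^β − y^β ≥ min(β,1)·x^{β−1}(x−y)`. -/
lemma rpow_sub_rpow_ge {β : ℝ} (hβ : 0 < β) {x y : ℝ} (hy : 1 ≤ y) (hxy : y ≤ x) :
    min β 1 * (x ^ (β - 1) * (x - y)) ≤ x ^ β - y ^ β := by
  have hy0 : (0 : ℝ) < y := lt_of_lt_of_le one_pos hy
  have hx0 : (0 : ℝ) < x := lt_of_lt_of_le hy0 hxy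
  have hxb : (0 : ℝ) < x ^ β := Real.rpow_pos_of_pos hx0 β
  have hxm : x ^ (β - 1) = x ^ β / x := by
    rw [Real.rpow_sub hx0, Real.rpow_one]
  rcases le_total β 1 with hb | hb
  · rw [min_eq_left hb]
    have key : (y / x) ^ β * (1 : ℝ) ^ (1 - β) ≤ β * (y / x) + (1 - β) * 1 :=
      Real.geom_mean_le_arith_mean2_weighted hβ.le (by linarith) (by positivity) zero_le_one
        (by ring)
    rw [Real.one_rpow, mul_one, mul_one] at key
    have hdiv : (y / x) ^ β = y ^ β / x ^ β := Real.div_rpow hy0.le hx0.le β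
    rw [hdiv, div_le_iff₀ hxb] at key
    -- key : y ^ β ≤ (β * (y / x) + (1 - β)) * x ^ β
    have hT : x ^ β = x ^ β / x * x := (div_mul_cancel₀ _ (ne_of_gt hx0)).symm
    have hexp : (β * (y / x) + (1 - β)) * x ^ β
        = β * y * (x ^ β / x) + (1 - β) * (x ^ β / x * x) := by
      field_simp
    have key2 : y ^ β ≤ β * y * (x ^ β / x) + (1 - β) * (x ^ β / x * x) := by
      rw [← hexp]; exact key
    rw [hxm]
    nlinarith [key2, hT]
  · rw [min_eq_right hb]
    have h1 : y ^ (β - 1) ≤ x ^ (β - 1) := Real.rpow_le_rpow hy0.le hxy (by linarith)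
    have hym : y ^ (β - 1) = y ^ β / y := by
      rw [Real.rpow_sub hy0, Real.rpow_one]
    have hxβ : x ^ β = x ^ (β - 1) * x := by
      rw [hxm, div_mul_cancel₀ _ (ne_of_gt hx0)]
    have hyβ : y ^ β = y ^ (β - 1) * y := by
      rw [hym, div_mul_cancel₀ _ (ne_of_gt hy0)]
    nlinarith [mul_le_mul_of_nonneg_right h1 hy0.le]

/-- The gap estimate: `λ_{j+4}^β − λ_{j+3}^β ≥ c1·(j+3)^{3β−1}`. -/
lemma gap {β : ℝ} (hβ : 1 / 3 < β) (j : ℕ) :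
    c1 β * ((j : ℝ) + 3) ^ (3 * β - 1) ≤ (lamG (j + 4) : ℝ) ^ β - (lamG (j + 3) : ℝ) ^ β := by
  have hβ0 : (0 : ℝ) < β := by linarith
  have hJ0 : (0 : ℝ) ≤ (j : ℝ) := Nat.cast_nonneg j
  set J : ℝ := (j : ℝ) with hJ
  have hx : (lamG (j + 4) : ℝ) = (J + 4) * (J + 3) * (J + 2) := by
    have e : j + 4 = (j + 1) + 3 := by omega
    rw [e, lamG_formula]
    push_cast
    ring
  have hy : (lamG (j + 3) : ℝ) = (J + 3) * (J + 2) * (J + 1) := lamG_formula j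
  set x : ℝ := (lamG (j + 4) : ℝ)
  set y : ℝ := (lamG (j + 3) : ℝ)
  have hy1 : 1 ≤ y := by
    rw [hy]
    nlinarith [hJ0, mul_nonneg hJ0 hJ0, mul_nonneg (mul_nonneg hJ0 hJ0) hJ0]
  have hxy : y ≤ x := by rw [hx, hy]; nlinarith
  have hx0 : (0 : ℝ) < x := by rw [hx]; positivity
  have main := rpow_sub_rpow_ge hβ0 hy1 hxy
  have hmin : (0 : ℝ) < min β 1 := lt_min hβ0 one_pos
  -- lower bound for x^(β−1)·(x−y)
  have e1 : x ^ (β - 1) = x ^ β / x := by rw [Real.rpow_sub hx0, Real.rpow_one]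
  have h1 : (J + 2) ^ (3 * β) ≤ x ^ β := by
    have e : (J + 2) ^ (3 * β) = ((J + 2) ^ (3 : ℕ)) ^ β := by
      rw [← Real.rpow_natCast (J + 2) 3, ← Real.rpow_mul (by positivity)]
      norm_num
    rw [e]
    refine Real.rpow_le_rpow (by positivity) ?_ hβ0.le
    rw [hx]; nlinarith
  have h2 : x ≤ 8 * (J + 2) ^ (3 : ℕ) := by rw [hx]; nlinarith
  have h3 : 3 * (J + 2) ^ (2 : ℕ) ≤ x - y := by rw [hx, hy]; nlinarith
  have hJ2 : (0 : ℝ) < J + 2 := by positivity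
  have key : (3 / 8) * ((J + 2) ^ (3 * β) / (J + 2)) ≤ x ^ (β - 1) * (x - y) := by
    rw [e1]
    calc (3 / 8) * ((J + 2) ^ (3 * β) / (J + 2))
        = (J + 2) ^ (3 * β) / (8 * (J + 2) ^ (3 : ℕ)) * (3 * (J + 2) ^ (2 : ℕ)) := by
          field_simp
      _ ≤ x ^ β / x * (x - y) := by
          refine mul_le_mul ?_ h3 (by positivity) (by positivity)
          exact div_le_div₀ (Real.rpow_pos_of_pos hx0 β).le h1 hx0 h2
  have e2 : (J + 2) ^ (3 * β) / (J + 2) = (J + 2) ^ (3 * β - 1) := by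
    rw [Real.rpow_sub hJ2, Real.rpow_one]
  have h4 : ((J + 3) / 2) ^ (3 * β - 1) ≤ (J + 2) ^ (3 * β - 1) :=
    Real.rpow_le_rpow (by positivity) (by linarith) (by linarith)
  have e3 : ((J + 3) / 2) ^ (3 * β - 1) = (J + 3) ^ (3 * β - 1) / (2 : ℝ) ^ (3 * β - 1) :=
    Real.div_rpow (by positivity) (by norm_num) _
  have h2r : (0 : ℝ) < (2 : ℝ) ^ (3 * β - 1) := Real.rpow_pos_of_pos two_pos _
  calc c1 β * (J + 3) ^ (3 * β - 1)
      = min β 1 * ((3 / 8) * ((J + 3) ^ (3 * β - 1) / (2 : ℝ) ^ (3 * β - 1))) := by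
        unfold c1; field_simp
    _ = min β 1 * ((3 / 8) * ((J + 3) / 2) ^ (3 * β - 1)) := by rw [e3]
    _ ≤ min β 1 * ((3 / 8) * (J + 2) ^ (3 * β - 1)) := by
        have := mul_le_mul_of_nonneg_left h4 (by norm_num : (0:ℝ) ≤ 3 / 8)
        exact mul_le_mul_of_nonneg_left this hmin.le
    _ = min β 1 * ((3 / 8) * ((J + 2) ^ (3 * β) / (J + 2))) := by rw [e2]
    _ ≤ min β 1 * (x ^ (β - 1) * (x - y)) := mul_le_mul_of_nonneg_left key hmin.le
    _ ≤ x ^ β - y ^ β := main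

/-- Telescoping lower bound: `λ_q^β − λ_h^β ≥ c1·(q−h)·h^{3β−1}` for `3 ≤ h ≤ q`. -/
lemma sub_lower {β : ℝ} (hβ : 1 / 3 < β) {h : ℕ} (hh : 3 ≤ h) :
    ∀ q, h ≤ q →
      c1 β * ((q - h : ℕ) : ℝ) * (h : ℝ) ^ (3 * β - 1)
        ≤ (lamG q : ℝ) ^ β - (lamG h : ℝ) ^ β := by
  intro q hq
  induction q, hq using Nat.le_induction with
  | base => simp
  | succ q hq ih =>
      obtain ⟨i, rfl⟩ : ∃ i, q = i + 3 := ⟨q - 3, by omega⟩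
      have hg := gap hβ i
      have hc1 := c1_pos hβ
      have hmono : ((h : ℝ)) ^ (3 * β - 1) ≤ ((i : ℝ) + 3) ^ (3 * β - 1) := by
        refine Real.rpow_le_rpow (by positivity) ?_ (by linarith)
        have : (h : ℝ) ≤ ((i + 3 : ℕ) : ℝ) := Nat.cast_le.mpr hq
        push_cast at this
        linarith
      have hprod : c1 β * ((h : ℝ)) ^ (3 * β - 1) ≤ c1 β * ((i : ℝ) + 3) ^ (3 * β - 1) :=
        mul_le_mul_of_nonneg_left hmono hc1.le
      have hcast : ((i + 3 + 1 - h : ℕ) : ℝ) = ((i + 3 - h : ℕ) : ℝ) + 1 := by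
        have e : i + 3 + 1 - h = (i + 3 - h) + 1 := by omega
        rw [e]
        push_cast
        ring
      have hidx : i + 3 + 1 = i + 4 := by omega
      rw [hidx] at *
      rw [show ((i + 4 - h : ℕ) : ℝ) = ((i + 3 - h : ℕ) : ℝ) + 1 by
        have e : i + 4 - h = (i + 3 - h) + 1 := by omega
        rw [e]; push_cast; ring]
      nlinarith [ih, hg, hprod]

/-- Power-scale lower bound: `λ_q^β − λ_p^β ≥ c2·(q−p)^{3β}` for `3 ≤ p < q`. -/
lemma sub_lower_pow {β : ℝ} (hβ : 1 / 3 < β) {p q : ℕ} (hp : 3 ≤ p) (hpq : p < q) :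
    c2 β * ((q - p : ℕ) : ℝ) ^ (3 * β) ≤ (lamG q : ℝ) ^ β - (lamG p : ℝ) ^ β := by
  have hc1 := c1_pos hβ
  set k : ℕ := q - p with hk
  set h : ℕ := p + k / 2 with hhdef
  have hh3 : 3 ≤ h := le_trans hp (Nat.le_add_right _ _)
  have hhq : h ≤ q := by omega
  have hk1 : 1 ≤ k := by omega
  have hk1R : (1 : ℝ) ≤ (k : ℝ) := by exact_mod_cast hk1
  have hmono : (lamG p : ℝ) ^ β ≤ (lamG h : ℝ) ^ β := by
    refine Real.rpow_le_rpow (Nat.cast_nonneg _) ?_ (by linarith)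
    exact_mod_cast lamG_mono (by omega : p ≤ h)
  have hL2 := sub_lower hβ hh3 q hhq
  have hc1' : (k : ℝ) / 2 ≤ ((q - h : ℕ) : ℝ) := by
    have hn : k ≤ 2 * (q - h) := by omega
    have := (Nat.cast_le (α := ℝ)).mpr hn
    push_cast at this
    linarith
  have hc2' : (k : ℝ) / 2 ≤ (h : ℝ) := by
    have hn : k ≤ 2 * h := by omega
    have := (Nat.cast_le (α := ℝ)).mpr hn
    push_cast at this
    linarith
  have hk20 : (0 : ℝ) < (k : ℝ) / 2 := by linarith
  have hs1 : (0 : ℝ) ≤ 3 * β - 1 := by linarith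
  have step1 : c1 β * ((k : ℝ) / 2) * ((k : ℝ) / 2) ^ (3 * β - 1)
      ≤ c1 β * ((q - h : ℕ) : ℝ) * ((h : ℝ)) ^ (3 * β - 1) := by
    have hA : ((k : ℝ) / 2) ^ (3 * β - 1) ≤ ((h : ℝ)) ^ (3 * β - 1) :=
      Real.rpow_le_rpow hk20.le hc2' hs1
    have hB : c1 β * ((k : ℝ) / 2) ≤ c1 β * ((q - h : ℕ) : ℝ) :=
      mul_le_mul_of_nonneg_left hc1' hc1.le
    refine mul_le_mul hB hA (by positivity) ?_
    positivity
  have step2 : c1 β * ((k : ℝ) / 2) * ((k : ℝ) / 2) ^ (3 * β - 1)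
      = c2 β * (k : ℝ) ^ (3 * β) := by
    have hpow : ((k : ℝ) / 2) ^ (3 * β - 1) * ((k : ℝ) / 2) = ((k : ℝ) / 2) ^ (3 * β) := by
      rw [← Real.rpow_add_one (ne_of_gt hk20)]
      ring_nf
    have hdiv : ((k : ℝ) / 2) ^ (3 * β) = (k : ℝ) ^ (3 * β) / (2 : ℝ) ^ (3 * β) :=
      Real.div_rpow (by positivity) (by norm_num) _
    unfold c2
    calc c1 β * ((k : ℝ) / 2) * ((k : ℝ) / 2) ^ (3 * β - 1)
        = c1 β * (((k : ℝ) / 2) ^ (3 * β - 1) * ((k : ℝ) / 2)) := by ring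
      _ = c1 β * (((k : ℝ)) ^ (3 * β) / (2 : ℝ) ^ (3 * β)) := by rw [hpow, hdiv]
      _ = c1 β / (2 : ℝ) ^ (3 * β) * (k : ℝ) ^ (3 * β) := by ring
  linarith [step1, step2.symm.le, hL2, hmono]

end GribovAux

/-- For `β > 1/3` there are `C > 0` and `m₀ ≥ 3` such that for all `m ≥ m₀`
the series `∑_{n=3}^∞ 1/|λₙ^β − r̃_m|` converges and is bounded by `C`. -/
theorem lamG_resolvent_series_bound (β : ℝ) (hβ : 1 / 3 < β) :
    ∃ C > 0, ∃ m₀ : ℕ, 3 ≤ m₀ ∧ ∀ m : ℕ, m₀ ≤ m →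
      Summable (fun n : ℕ => 1 / |((lamG (n + 3) : ℝ)) ^ β - rTilde β m|) ∧
        ∑' n : ℕ, 1 / |((lamG (n + 3) : ℝ)) ^ β - rTilde β m| ≤ C := by
  classical
  have hs : (1 : ℝ) < 3 * β := by linarith
  have hc1 := GribovAux.c1_pos hβ
  have hc2 := GribovAux.c2_pos hβ
  set u : ℕ → ℝ := fun j => 1 / (j : ℝ) ^ (3 * β) with hu
  have hu_sum : Summable u := Real.summable_one_div_nat_rpow.mpr hs
  have hu_nonneg : ∀ j, 0 ≤ u j := fun j => by
    simp only [hu]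
    positivity
  set Z := ∑' j, u j with hZdef
  have hZ0 : 0 ≤ Z := tsum_nonneg hu_nonneg
  set C : ℝ := 2 * (1 / GribovAux.c2 β) * Z + 4 / GribovAux.c1 β + 1 with hC
  have hCpos : 0 < C := by
    have h1 : 0 ≤ 2 * (1 / GribovAux.c2 β) * Z := by
      apply mul_nonneg _ hZ0
      positivity
    have h2 : 0 < 4 / GribovAux.c1 β := by positivity
    rw [hC]; linarith
  refine ⟨C, hCpos, 3, le_refl 3, ?_⟩
  intro m hm
  obtain ⟨μ, rfl⟩ : ∃ μ, m = μ + 3 := ⟨m - 3, by omega⟩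
  set r : ℝ := rTilde β (μ + 3) with hrdef
  have hr : r = ((lamG (μ + 3) : ℝ) ^ β + (lamG (μ + 4) : ℝ) ^ β) / 2 := by
    rw [hrdef, rTilde]
  have hgapm := GribovAux.gap hβ μ
  have hone : (1 : ℝ) ≤ ((μ : ℝ) + 3) ^ (3 * β - 1) :=
    Real.one_le_rpow (by linarith [show (0:ℝ) ≤ (μ:ℝ) from Nat.cast_nonneg μ]) (by linarith)
  have hgap1 : GribovAux.c1 β ≤ (lamG (μ + 4) : ℝ) ^ β - (lamG (μ + 3) : ℝ) ^ β := by
    nlinarith [hgapm, hc1, hone]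
  -- termwise distance bounds
  have hleft : ∀ n : ℕ, n + 3 < μ + 3 →
      GribovAux.c2 β * ((μ + 3 - (n + 3) : ℕ) : ℝ) ^ (3 * β) ≤ r - (lamG (n + 3) : ℝ) ^ β := by
    intro n hn
    have h1 := GribovAux.sub_lower_pow hβ (by omega : 3 ≤ n + 3) hn
    rw [hr]
    linarith [hgap1, h1]
  have hright : ∀ n : ℕ, μ + 4 < n + 3 →
      GribovAux.c2 β * ((n + 3 - (μ + 4) : ℕ) : ℝ) ^ (3 * β) ≤ (lamG (n + 3) : ℝ) ^ β - r := by
    intro n hn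
    have h1 := GribovAux.sub_lower_pow hβ (by omega : 3 ≤ μ + 4) hn
    rw [hr]
    linarith [hgap1, h1]
  set f : ℕ → ℝ := fun n => 1 / |(lamG (n + 3) : ℝ) ^ β - r| with hf
  have hf0 : ∀ n, 0 ≤ f n := fun n => by
    simp only [hf]
    positivity
  -- termwise bounds on f
  have hfleft : ∀ n : ℕ, n + 3 < μ + 3 →
      f n ≤ (1 / GribovAux.c2 β) * u (μ + 3 - (n + 3)) := by
    intro n hn
    have hkpos : (0 : ℝ) < ((μ + 3 - (n + 3) : ℕ) : ℝ) := by
      have : 0 < μ + 3 - (n + 3) := by omega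
      exact_mod_cast this
    have hppos : (0 : ℝ) < ((μ + 3 - (n + 3) : ℕ) : ℝ) ^ (3 * β) :=
      Real.rpow_pos_of_pos hkpos _
    have h1 := hleft n hn
    have h2 : 0 < r - (lamG (n + 3) : ℝ) ^ β := lt_of_lt_of_le (mul_pos hc2 hppos) h1
    have habs : |(lamG (n + 3) : ℝ) ^ β - r| = r - (lamG (n + 3) : ℝ) ^ β := by
      rw [abs_sub_comm, abs_of_pos h2]
    simp only [hf, habs, hu]
    calc 1 / (r - (lamG (n + 3) : ℝ) ^ β)
        ≤ 1 / (GribovAux.c2 β * ((μ + 3 - (n + 3) : ℕ) : ℝ) ^ (3 * β)) :=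
          one_div_le_one_div_of_le (mul_pos hc2 hppos) h1
      _ = 1 / GribovAux.c2 β * (1 / ((μ + 3 - (n + 3) : ℕ) : ℝ) ^ (3 * β)) :=
          (one_div_mul_one_div _ _).symm
  have hfright : ∀ n : ℕ, μ + 4 < n + 3 →
      f n ≤ (1 / GribovAux.c2 β) * u (n + 3 - (μ + 4)) := by
    intro n hn
    have hkpos : (0 : ℝ) < ((n + 3 - (μ + 4) : ℕ) : ℝ) := by
      have : 0 < n + 3 - (μ + 4) := by omega
      exact_mod_cast this
    have hppos : (0 : ℝ) < ((n + 3 - (μ + 4) : ℕ) : ℝ) ^ (3 * β) :=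
      Real.rpow_pos_of_pos hkpos _
    have h1 := hright n hn
    have h2 : 0 < (lamG (n + 3) : ℝ) ^ β - r := lt_of_lt_of_le (mul_pos hc2 hppos) h1
    have habs : |(lamG (n + 3) : ℝ) ^ β - r| = (lamG (n + 3) : ℝ) ^ β - r := abs_of_pos h2
    simp only [hf, habs, hu]
    calc 1 / ((lamG (n + 3) : ℝ) ^ β - r)
        ≤ 1 / (GribovAux.c2 β * ((n + 3 - (μ + 4) : ℕ) : ℝ) ^ (3 * β)) :=
          one_div_le_one_div_of_le (mul_pos hc2 hppos) h1
      _ = 1 / GribovAux.c2 β * (1 / ((n + 3 - (μ + 4) : ℕ) : ℝ) ^ (3 * β)) :=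
          (one_div_mul_one_div _ _).symm
  have hfmid : ∀ n : ℕ, μ + 3 ≤ n + 3 → n + 3 ≤ μ + 4 → f n ≤ 2 / GribovAux.c1 β := by
    intro n h1 h2
    have hdist : GribovAux.c1 β / 2 ≤ |(lamG (n + 3) : ℝ) ^ β - r| := by
      rcases (by omega : n = μ ∨ n = μ + 1) with rfl | rfl
      · have hpos : 0 < r - (lamG (n + 3) : ℝ) ^ β := by
          rw [hr]; nlinarith [hgap1, hc1]
        rw [abs_sub_comm, abs_of_pos hpos, hr]
        linarith [hgap1]
      · have hidx : μ + 1 + 3 = μ + 4 := by omega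
        rw [hidx]
        have hpos : 0 < (lamG (μ + 4) : ℝ) ^ β - r := by
          rw [hr]; nlinarith [hgap1, hc1]
        rw [abs_of_pos hpos, hr]
        linarith [hgap1]
    have habspos : 0 < |(lamG (n + 3) : ℝ) ^ β - r| := lt_of_lt_of_le (by positivity) hdist
    simp only [hf]
    calc 1 / |(lamG (n + 3) : ℝ) ^ β - r| ≤ 1 / (GribovAux.c1 β / 2) :=
          one_div_le_one_div_of_le (by positivity : (0:ℝ) < GribovAux.c1 β / 2) hdist
      _ = 2 / GribovAux.c1 β := one_div_div _ _
  -- uniform bound on partial sums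
  have key : ∀ M : ℕ, ∑ n ∈ Finset.range M, f n
      ≤ 2 * (1 / GribovAux.c2 β) * Z + 4 / GribovAux.c1 β := by
    intro M
    set S := Finset.range M with hS
    set S₁ := S.filter (fun n => n + 3 < μ + 3) with hS₁
    set T := S.filter (fun n => ¬(n + 3 < μ + 3)) with hT
    set S₂ := T.filter (fun n => n + 3 ≤ μ + 4) with hS₂
    set S₃ := T.filter (fun n => ¬(n + 3 ≤ μ + 4)) with hS₃
    have hsplit : ∑ n ∈ S, f n = ∑ n ∈ S₁, f n + (∑ n ∈ S₂, f n + ∑ n ∈ S₃, f n) := by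
      rw [hS₂, hS₃, Finset.sum_filter_add_sum_filter_not T _ f, hS₁, hT,
        Finset.sum_filter_add_sum_filter_not S _ f]
    have hb1 : ∑ n ∈ S₁, f n ≤ (1 / GribovAux.c2 β) * Z := by
      have inj : ∀ a ∈ S₁, ∀ b ∈ S₁, μ + 3 - (a + 3) = μ + 3 - (b + 3) → a = b := by
        intro a ha b hb hab
        have ha' := (Finset.mem_filter.mp ha).2
        have hb' := (Finset.mem_filter.mp hb).2
        omega
      calc ∑ n ∈ S₁, f n
          ≤ ∑ n ∈ S₁, (1 / GribovAux.c2 β) * u (μ + 3 - (n + 3)) := by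
            refine Finset.sum_le_sum fun n hn => ?_
            exact hfleft n (Finset.mem_filter.mp hn).2
        _ = (1 / GribovAux.c2 β) * ∑ n ∈ S₁, u (μ + 3 - (n + 3)) := by
            rw [Finset.mul_sum]
        _ = (1 / GribovAux.c2 β) * ∑ j ∈ S₁.image (fun n => μ + 3 - (n + 3)), u j := by
            rw [Finset.sum_image inj]
        _ ≤ (1 / GribovAux.c2 β) * Z := by
            refine mul_le_mul_of_nonneg_left ?_ (by positivity)
            exact Summable.sum_le_tsum _ (fun j _ => hu_nonneg j) hu_sum
    have hb3 : ∑ n ∈ S₃, f n ≤ (1 / GribovAux.c2 β) * Z := by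
      have inj : ∀ a ∈ S₃, ∀ b ∈ S₃, a + 3 - (μ + 4) = b + 3 - (μ + 4) → a = b := by
        intro a ha b hb hab
        have ha' := (Finset.mem_filter.mp ha).2
        have hb' := (Finset.mem_filter.mp hb).2
        omega
      calc ∑ n ∈ S₃, f n
          ≤ ∑ n ∈ S₃, (1 / GribovAux.c2 β) * u (n + 3 - (μ + 4)) := by
            refine Finset.sum_le_sum fun n hn => ?_
            have hn' := (Finset.mem_filter.mp hn).2
            exact hfright n (by omega)
        _ = (1 / GribovAux.c2 β) * ∑ n ∈ S₃, u (n + 3 - (μ + 4)) := by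
            rw [Finset.mul_sum]
        _ = (1 / GribovAux.c2 β) * ∑ j ∈ S₃.image (fun n => n + 3 - (μ + 4)), u j := by
            rw [Finset.sum_image inj]
        _ ≤ (1 / GribovAux.c2 β) * Z := by
            refine mul_le_mul_of_nonneg_left ?_ (by positivity)
            exact Summable.sum_le_tsum _ (fun j _ => hu_nonneg j) hu_sum
    have hb2 : ∑ n ∈ S₂, f n ≤ 4 / GribovAux.c1 β := by
      have hsub : S₂ ⊆ {μ, μ + 1} := by
        intro n hn
        have h1 := (Finset.mem_filter.mp hn).2
        have h2 := (Finset.mem_filter.mp (Finset.mem_filter.mp hn).1).2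
        simp only [Finset.mem_insert, Finset.mem_singleton]
        omega
      have hcard : S₂.card ≤ 2 := by
        refine le_trans (Finset.card_le_card hsub) ?_
        refine le_trans (Finset.card_insert_le _ _) ?_
        simp
      calc ∑ n ∈ S₂, f n ≤ ∑ _n ∈ S₂, (2 / GribovAux.c1 β) := by
            refine Finset.sum_le_sum fun n hn => ?_
            have h1 := (Finset.mem_filter.mp hn).2
            have h2 := (Finset.mem_filter.mp (Finset.mem_filter.mp hn).1).2
            exact hfmid n (by omega) h1
        _ = (S₂.card : ℝ) * (2 / GribovAux.c1 β) := by
            rw [Finset.sum_const, nsmul_eq_mul]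
        _ ≤ 2 * (2 / GribovAux.c1 β) := by
            refine mul_le_mul_of_nonneg_right ?_ (by positivity)
            exact_mod_cast hcard
        _ = 4 / GribovAux.c1 β := by ring
    rw [hsplit]
    linarith [hb1, hb2, hb3]
  constructor
  · exact summable_of_sum_range_le hf0 key
  · refine le_trans (Real.tsum_le_of_sum_range_le hf0 key) ?_
    rw [hC]
    linarith
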